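/- Let n ≥ 1 be an integer. Then ∏_{l=0}^{n−1} ∏_{m=0}^{n−1} Γ((l+m+2)/(n+1) + 1) = (2π)^{(n²−n)/2} · (n+1)^{−3(n²−1)/2} · ∏_{m=1}^{n−1} (m+n+1)!, where Γ denotes the real Gamma function. -/

import Mathlib

section helpers
open Finset Complex Polynomial

lemma prod_sub_zpow (N : ℕ) (hN : 1 ≤ N) {ζ : ℂ} (hprim : IsPrimitiveRoot ζ N) (x : ℂ) :
    ∏ k ∈ Finset.range N, (x - ζ ^ k) = x ^ N - 1 := by
  have h1 := hprim.pow_sub_pow_eq_prod_sub_mul x 1 (by omega)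
  simp only [one_pow, mul_one] at h1
  rw [h1]
  -- nthRootsFinset = image of powers
  have h2 : (Polynomial.nthRootsFinset N (1:ℂ)) = Finset.image (fun k => ζ ^ k) (Finset.range N) := by
    ext a
    simp only [Polynomial.mem_nthRootsFinset (by omega : 0 < N), Finset.mem_image, Finset.mem_range]
    constructor
    · intro ha
      haveI : NeZero N := ⟨by omega⟩
      obtain ⟨i, hi, rfl⟩ := hprim.eq_pow_of_pow_eq_one ha
      exact ⟨i, hi, rfl⟩
    · rintro ⟨i, _, rfl⟩
      rw [← pow_mul, mul_comm, pow_mul, hprim.pow_eq_one, one_pow]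
  rw [h2, Finset.prod_image]
  intro a ha b hb hab
  exact hprim.pow_inj (Finset.mem_range.1 ha) (Finset.mem_range.1 hb) hab

lemma prod_one_sub_pow (N : ℕ) (hN : 1 ≤ N) {ζ : ℂ} (hprim : IsPrimitiveRoot ζ N) :
    ∏ k ∈ Finset.Ico 1 N, (1 - ζ ^ k) = (N : ℂ) := by
  have key : ∀ x : ℂ, ∏ k ∈ Finset.Ico 1 N, (x - ζ ^ k) = ∑ i ∈ Finset.range N, x ^ i := by
    have cont1 : Continuous fun x : ℂ => ∏ k ∈ Finset.Ico 1 N, (x - ζ ^ k) := by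
      continuity
    have cont2 : Continuous fun x : ℂ => ∑ i ∈ Finset.range N, x ^ i := by
      continuity
    have : Set.EqOn (fun x : ℂ => ∏ k ∈ Finset.Ico 1 N, (x - ζ ^ k))
        (fun x : ℂ => ∑ i ∈ Finset.range N, x ^ i) {(1:ℂ)}ᶜ := by
      intro x hx
      have hx1 : x - 1 ≠ 0 := sub_ne_zero.2 hx
      apply mul_left_cancel₀ hx1
      have split : ∏ k ∈ Finset.range N, (x - ζ ^ k)
          = (x - 1) * ∏ k ∈ Finset.Ico 1 N, (x - ζ ^ k) := by
        rw [Finset.range_eq_Ico, Finset.prod_eq_prod_Ico_succ_bot (by omega : 0 < N)]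
        simp
      have := prod_sub_zpow N hN hprim x
      rw [split] at this
      rw [this, ← geom_sum_mul, mul_comm]
    have := Continuous.ext_on (dense_compl_singleton (1:ℂ)) cont1 cont2 this
    exact fun x => congrFun this x
  have := key 1
  simpa using this

lemma abs_one_sub_exp (θ : ℝ) :
    ‖(1 - Complex.exp (θ * I))‖ = 2 * |Real.sin (θ / 2)| := by
  have h1 : (‖(1 - Complex.exp (θ * I))‖)^2 = (2 * |Real.sin (θ / 2)|)^2 := by
    rw [Complex.sq_norm, Complex.exp_mul_I]
    simp only [Complex.normSq_apply, Complex.sub_re, Complex.sub_im, Complex.one_re,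
      Complex.one_im, Complex.add_re, Complex.add_im, Complex.mul_re, Complex.mul_im,
      Complex.I_re, Complex.I_im, Complex.cos_ofReal_re, Complex.cos_ofReal_im,
      Complex.sin_ofReal_re, Complex.sin_ofReal_im, mul_pow, sq_abs]
    have hs : Real.sin (θ / 2) ^ 2 = (1 - Real.cos θ) / 2 := by
      have h2 := Real.cos_two_mul (θ / 2)
      have h3 := Real.sin_sq_add_cos_sq (θ / 2)
      have h4 : 2 * (θ / 2) = θ := by ring
      rw [h4] at h2
      nlinarith
    have hc := Real.sin_sq_add_cos_sq θ
    nlinarith [hs, hc]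
  have ha : 0 ≤ ‖(1 - Complex.exp (θ * I))‖ := norm_nonneg _
  have hb : 0 ≤ 2 * |Real.sin (θ / 2)| := by positivity
  nlinarith [h1, ha, hb]

lemma prod_sin (N : ℕ) (hN : 1 ≤ N) :
    ∏ k ∈ Finset.Ico 1 N, Real.sin (Real.pi * k / N) = N / 2 ^ (N - 1) := by
  have hprim : IsPrimitiveRoot (Complex.exp (2 * Real.pi * I / N)) N :=
    Complex.isPrimitiveRoot_exp N (by omega)
  have h := congrArg (‖·‖) (prod_one_sub_pow N hN hprim)
  rw [norm_prod] at h
  have hNpos : (0:ℝ) < N := by positivity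
  have hterm : ∀ k ∈ Finset.Ico 1 N,
      ‖(1 - Complex.exp (2 * Real.pi * I / N) ^ k)‖ = 2 * Real.sin (Real.pi * k / N) := by
    intro k hk
    rw [Finset.mem_Ico] at hk
    have : Complex.exp (2 * Real.pi * I / N) ^ k = Complex.exp ((2 * Real.pi * k / N : ℝ) * I) := by
      rw [← Complex.exp_nat_mul]
      congr 1
      push_cast
      ring
    rw [this, abs_one_sub_exp]
    have harg : (2 * Real.pi * k / N) / 2 = Real.pi * k / N := by ring
    rw [harg, abs_of_pos]
    apply Real.sin_pos_of_pos_of_lt_pi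
    · have : (0:ℝ) < k := by exact_mod_cast hk.1
      positivity
    · rw [div_lt_iff₀ hNpos]
      have : (k:ℝ) < N := by exact_mod_cast hk.2
      nlinarith [Real.pi_pos]
  rw [Finset.prod_congr rfl hterm, Finset.prod_mul_distrib, Finset.prod_const] at h
  rw [Complex.norm_natCast, Nat.card_Ico] at h
  have h2 : (0:ℝ) < 2 ^ (N-1) := by positivity
  field_simp at h ⊢
  linarith [h]

lemma gamma_prod (N : ℕ) (hN : 1 ≤ N) :
    ∏ k ∈ Finset.Ico 1 N, Real.Gamma (k / N) =
      (2 * Real.pi) ^ (((N:ℝ) - 1) / 2) * (N:ℝ) ^ (-(1:ℝ) / 2) := by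
  have hNpos : (0:ℝ) < N := by positivity
  set P := ∏ k ∈ Finset.Ico 1 N, Real.Gamma (k / N) with hP
  have hPpos : 0 < P := by
    apply Finset.prod_pos
    intro k hk
    rw [Finset.mem_Ico] at hk
    apply Real.Gamma_pos_of_pos
    have : (0:ℝ) < k := by exact_mod_cast hk.1
    positivity
  have hrefl : P = ∏ k ∈ Finset.Ico 1 N, Real.Gamma (1 - k / N) := by
    rw [hP]
    apply Finset.prod_nbij' (fun k => N - k) (fun k => N - k)
    · intro k hk; rw [Finset.mem_Ico] at hk ⊢; omega
    · intro k hk; rw [Finset.mem_Ico] at hk ⊢; omega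
    · intro k hk; rw [Finset.mem_Ico] at hk; omega
    · intro k hk; rw [Finset.mem_Ico] at hk; omega
    · intro k hk
      rw [Finset.mem_Ico] at hk
      congr 1
      have : ((N - k : ℕ) : ℝ) = (N:ℝ) - k := by
        have : k ≤ N := by omega
        push_cast [this]; ring
      rw [this]
      field_simp
      ring
  have hsq : P ^ 2 = (2 * Real.pi) ^ (N - 1) / N := by
    have : P ^ 2 = ∏ k ∈ Finset.Ico 1 N, (Real.Gamma (k / N) * Real.Gamma (1 - k / N)) := by
      rw [Finset.prod_mul_distrib, ← hP, ← hrefl]; ring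
    rw [this]
    have hterm : ∀ k ∈ Finset.Ico 1 N,
        Real.Gamma (k / N) * Real.Gamma (1 - k / N) = Real.pi / Real.sin (Real.pi * k / N) := by
      intro k hk
      rw [Real.Gamma_mul_Gamma_one_sub]
      congr 2
      ring
    rw [Finset.prod_congr rfl hterm, Finset.prod_div_distrib, Finset.prod_const, prod_sin N hN,
      Nat.card_Ico]
    have h2 : (0:ℝ) < 2 ^ (N - 1) := by positivity
    field_simp
    ring
  -- now identify with rpow expression
  have hRpos : (0:ℝ) < (2 * Real.pi) ^ (((N:ℝ) - 1) / 2) * (N:ℝ) ^ (-(1:ℝ) / 2) := by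
    have := Real.pi_pos
    positivity
  have hRsq : ((2 * Real.pi) ^ (((N:ℝ) - 1) / 2) * (N:ℝ) ^ (-(1:ℝ) / 2)) ^ 2
      = (2 * Real.pi) ^ (N - 1) / N := by
    rw [mul_pow, ← Real.rpow_natCast ((2*Real.pi) ^ (((N:ℝ)-1)/2)) 2,
      ← Real.rpow_natCast ((N:ℝ) ^ (-(1:ℝ)/2)) 2,
      ← Real.rpow_mul (by positivity), ← Real.rpow_mul (le_of_lt hNpos)]
    push_cast
    have e1 : ((N:ℝ) - 1) / 2 * 2 = ((N - 1 : ℕ) : ℝ) := by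
      push_cast [Nat.cast_sub hN]; ring
    have e2 : (-(1:ℝ) / 2 * 2) = -1 := by norm_num
    rw [e1, e2, Real.rpow_natCast, Real.rpow_neg_one]
    ring
  nlinarith [hsq, hRsq, hPpos, hRpos]

-- helper: ascending factorial product
lemma prod_cast_fact (a k : ℕ) :
    ∏ m ∈ Finset.range k, ((a:ℝ) + m + 1) = ((a + k).factorial : ℝ) / (a.factorial : ℝ) := by
  induction k with
  | zero =>
      have h2 : (0:ℝ) < (a.factorial : ℝ) := by positivity
      simp [div_self (ne_of_gt h2)]
  | succ k ih =>
      rw [Finset.prod_range_succ, ih]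
      have h1 : (a + (k+1)).factorial = (a + k + 1) * (a + k).factorial := by
        have : a + (k+1) = (a+k) + 1 := by omega
        rw [this, Nat.factorial_succ]
      rw [h1]
      have h2 : (0:ℝ) < (a.factorial : ℝ) := by positivity
      have h3 : (0:ℝ) < ((a+k).factorial : ℝ) := by positivity
      field_simp
      push_cast
      ring

end helpers

open Finset in
/-- Formula (39) of the paper:
`∏_{l=0}^{n−1} ∏_{m=0}^{n−1} Γ((l+m+2)/(n+1) + 1)
  = (2π)^{(n²−n)/2}·(n+1)^{−3(n²−1)/2}·∏_{m=1}^{n−1}(m+n+1)!`. -/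
theorem double_prod_gamma_eq (n : ℕ) (hn : 1 ≤ n) :
    ∏ l ∈ Finset.range n, ∏ m ∈ Finset.range n,
        Real.Gamma (((l : ℝ) + (m : ℝ) + 2) / ((n : ℝ) + 1) + 1) =
      (2 * Real.pi) ^ (((n : ℝ) ^ 2 - (n : ℝ)) / 2) *
        ((n : ℝ) + 1) ^ (-(3 * ((n : ℝ) ^ 2 - 1) / 2)) *
        ∏ m ∈ Finset.Icc 1 (n - 1), ((m + n + 1).factorial : ℝ) := by
  set N : ℝ := (n:ℝ) + 1 with hNdef
  have hNpos : (0:ℝ) < N := by positivity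
  set P : ℝ := ∏ k ∈ Finset.Ico 1 (n+1), Real.Gamma ((k:ℝ) / N) with hPdef
  -- Euler's product
  have hP : P = (2 * Real.pi) ^ ((n:ℝ)/2) * N ^ (-(1:ℝ)/2) := by
    have := gamma_prod (n+1) (by omega)
    push_cast at this
    rw [hPdef, hNdef]
    convert this using 3 <;> push_cast <;> ring
  have hPpos : 0 < P := by
    rw [hP]; have := Real.pi_pos; positivity
  -- the row product of Gammas (without +1)
  have hF : ∀ l : ℕ, ∏ m ∈ Finset.range n, Real.Gamma (((l:ℝ) + m + 2)/N)
      = (l.factorial : ℝ) / N^l * P / Real.Gamma (((l:ℝ)+1)/N) := by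
    intro l
    induction l with
    | zero =>
        have hsplit : ∏ k ∈ Finset.Ico 1 (n+2), Real.Gamma ((k:ℝ)/N)
            = P * Real.Gamma (((n+1:ℕ):ℝ)/N) :=
          Finset.prod_Ico_succ_top (by omega) _
        have h1 : Real.Gamma (((n+1:ℕ):ℝ)/N) = 1 := by
          have : ((n+1:ℕ):ℝ)/N = 1 := by
            rw [hNdef]; push_cast; field_simp
          rw [this, Real.Gamma_one]
        have hsplit2 : ∏ k ∈ Finset.Ico 1 (n+2), Real.Gamma ((k:ℝ)/N)
            = Real.Gamma ((1:ℝ)/N) * ∏ k ∈ Finset.Ico 2 (n+2), Real.Gamma ((k:ℝ)/N) := by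
          rw [Finset.prod_eq_prod_Ico_succ_bot (by omega : 1 < n+2)]
          norm_num
        have hIco : ∏ k ∈ Finset.Ico 2 (n+2), Real.Gamma ((k:ℝ)/N)
            = ∏ m ∈ Finset.range n, Real.Gamma ((((0:ℕ):ℝ) + (m:ℝ) + 2)/N) := by
          rw [Finset.prod_Ico_eq_prod_range]
          simp only [Nat.add_sub_cancel]
          apply Finset.prod_congr rfl
          intro m _
          congr 1
          push_cast
          ring
        have hG1pos : 0 < Real.Gamma ((1:ℝ)/N) := Real.Gamma_pos_of_pos (by positivity)
        rw [show ((Nat.zero:ℕ):ℝ) = ((0:ℕ):ℝ) from rfl] at *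
        rw [← hIco]
        have : P = Real.Gamma ((1:ℝ)/N) * ∏ k ∈ Finset.Ico 2 (n+2), Real.Gamma ((k:ℝ)/N) := by
          rw [← hsplit2, hsplit, h1, mul_one]
        rw [this]
        have hcast : (((0:ℕ):ℝ)+1)/N = (1:ℝ)/N := by norm_num
        rw [hcast]
        simp only [Nat.factorial_zero, Nat.cast_one, pow_zero]
        field_simp
    | succ l ih =>
        set g : ℕ → ℝ := fun m => Real.Gamma (((l:ℝ) + m + 2)/N) with hg
        have hcast : ∀ m : ℕ, ((l+1:ℕ):ℝ) + m + 2 = (l:ℝ) + (m+1) + 2 := by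
          intro m; push_cast; ring
        have hLHS : ∏ m ∈ Finset.range n, Real.Gamma ((((l+1:ℕ):ℝ) + (m:ℝ) + 2)/N)
            = ∏ m ∈ Finset.range n, g (m+1) := by
          apply Finset.prod_congr rfl
          intro m _
          simp only [hg]
          congr 1
          rw [hcast m]
          push_cast
          ring
        have hshift : g 0 * ∏ m ∈ Finset.range n, g (m+1) = (∏ m ∈ Finset.range n, g m) * g n := by
          rw [mul_comm (g 0), ← Finset.prod_range_succ' g n, Finset.prod_range_succ]
        have hg0pos : 0 < g 0 := by
          simp only [hg]
          apply Real.Gamma_pos_of_pos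
          positivity
        have hgn : g n = (((l:ℝ)+1)/N) * Real.Gamma (((l:ℝ)+1)/N) := by
          simp only [hg]
          have harg : ((l:ℝ) + n + 2)/N = ((l:ℝ)+1)/N + 1 := by
            rw [hNdef]; field_simp; ring
          rw [harg, Real.Gamma_add_one (by positivity)]
        have hGl1 : 0 < Real.Gamma (((l:ℝ)+1)/N) := Real.Gamma_pos_of_pos (by positivity)
        have hGl2 : 0 < Real.Gamma (((l:ℝ)+2)/N) := Real.Gamma_pos_of_pos (by positivity)
        have hg0 : g 0 = Real.Gamma (((l:ℝ)+2)/N) := by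
          simp only [hg]; norm_num
        rw [hLHS]
        have step : ∏ m ∈ Finset.range n, g (m+1) = (∏ m ∈ Finset.range n, g m) * g n / g 0 := by
          field_simp
          linarith [hshift]
        rw [step, ih, hgn, hg0]
        have hcast2 : ((l+1:ℕ):ℝ) = (l:ℝ)+1 := by push_cast; ring
        rw [hcast2]
        have hfact : (((l+1:ℕ)).factorial : ℝ) = ((l:ℝ)+1) * (l.factorial : ℝ) := by
          rw [Nat.factorial_succ]; push_cast; ring
        rw [hfact]
        have hNl : (0:ℝ) < N ^ l := by positivity
        have hfl : (0:ℝ) < (l.factorial : ℝ) := by positivity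
        have : ((l:ℝ)+1)+1 = (l:ℝ)+2 := by ring
        rw [this, pow_succ]
        field_simp
  -- row product including the +1 shift
  have hrow : ∀ l : ℕ, ∏ m ∈ Finset.range n, Real.Gamma (((l:ℝ) + (m:ℝ) + 2)/N + 1)
      = (((l+n+1).factorial : ℝ) / ((l:ℝ)+1)) / N^(n+l) * P / Real.Gamma (((l:ℝ)+1)/N) := by
    intro l
    have hsplit : ∀ m ∈ Finset.range n, Real.Gamma (((l:ℝ) + (m:ℝ) + 2)/N + 1)
        = (((l:ℝ) + (m:ℝ) + 2)/N) * Real.Gamma (((l:ℝ) + (m:ℝ) + 2)/N) := by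
      intro m _
      rw [Real.Gamma_add_one (by positivity)]
    rw [Finset.prod_congr rfl hsplit, Finset.prod_mul_distrib, hF l,
      Finset.prod_div_distrib, Finset.prod_const, Finset.card_range]
    have hnum : ∏ m ∈ Finset.range n, ((l:ℝ) + (m:ℝ) + 2)
        = ((l+1+n).factorial : ℝ) / ((l+1).factorial : ℝ) := by
      rw [← prod_cast_fact (l+1) n]
      apply Finset.prod_congr rfl
      intro m _
      push_cast
      ring
    rw [hnum]
    have h1 : ((l+1).factorial : ℝ) = ((l:ℝ)+1) * (l.factorial : ℝ) := by
      rw [Nat.factorial_succ]; push_cast; ring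
    have h2 : (l+1+n) = (l+n+1) := by omega
    rw [h1, h2, pow_add]
    have hGl1 : 0 < Real.Gamma (((l:ℝ)+1)/N) := Real.Gamma_pos_of_pos (by positivity)
    have hfl : (0:ℝ) < (l.factorial : ℝ) := by positivity
    have hNn : (0:ℝ) < N ^ n := by positivity
    have hNl : (0:ℝ) < N ^ l := by positivity
    field_simp
  -- take product over l
  rw [Finset.prod_congr rfl (fun l _ => hrow l)]
  rw [Finset.prod_div_distrib, Finset.prod_mul_distrib, Finset.prod_const, Finset.card_range,
    Finset.prod_div_distrib, Finset.prod_div_distrib, Finset.prod_pow_eq_pow_sum]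
  -- the Gamma product in the denominator equals P
  have hGamP : ∏ l ∈ Finset.range n, Real.Gamma (((l:ℝ)+1)/N) = P := by
    rw [hPdef, Finset.prod_Ico_eq_prod_range]
    simp only [Nat.add_sub_cancel]
    apply Finset.prod_congr rfl
    intro l _
    congr 1
    push_cast
    ring
  rw [hGamP]
  -- denominator product is n!
  have hden : ∏ l ∈ Finset.range n, ((l:ℝ)+1) = (n.factorial : ℝ) := by
    clear hrow hF hGamP hP hPpos hPdef hNdef hNpos hn
    induction n with
    | zero => simp
    | succ k ih => rw [Finset.prod_range_succ, ih, Nat.factorial_succ]; push_cast; ring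
  rw [hden]
  -- factorial product splits
  have hfactprod : ∏ l ∈ Finset.range n, (((l+n+1).factorial : ℝ))
      = (((n+1).factorial : ℝ)) * ∏ m ∈ Finset.Icc 1 (n-1), (((m+n+1).factorial : ℝ)) := by
    obtain ⟨k, rfl⟩ : ∃ k, n = k + 1 := ⟨n - 1, by omega⟩
    rw [Finset.prod_range_succ']
    have hIcc : Finset.Icc 1 (k+1-1) = Finset.Ico 1 (k+1) := by
      rw [Nat.add_sub_cancel, ← Finset.Ico_add_one_right_eq_Icc]
    rw [hIcc, Finset.prod_Ico_eq_prod_range]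
    simp only [Nat.add_sub_cancel]
    rw [mul_comm]
    congr 1
    · norm_num
    · apply Finset.prod_congr rfl
      intro i _
      congr 2
      omega
  rw [hfactprod]
  -- the sum in the exponent
  have hS : ((∑ l ∈ Finset.range n, (n+l) : ℕ) : ℝ) = (3*(n:ℝ)^2 - n)/2 := by
    rw [Finset.sum_add_distrib, Finset.sum_const, Finset.card_range, smul_eq_mul]
    have h2 := Finset.sum_range_id_mul_two n
    have : ((∑ l ∈ Finset.range n, l : ℕ) : ℝ) * 2 = (n:ℝ) * ((n:ℝ) - 1) := by
      rw [← Nat.cast_ofNat, ← Nat.cast_mul, h2]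
      push_cast [Nat.cast_sub hn]
      ring
    push_cast at this ⊢
    nlinarith [this]
  -- convert N ^ (nat sum) to rpow
  have hNS : N ^ (∑ l ∈ Finset.range n, (n+l)) = N ^ ((3*(n:ℝ)^2 - n)/2) := by
    rw [← Real.rpow_natCast N (∑ l ∈ Finset.range n, (n+l)), hS]
  rw [hNS]
  -- P ^ n as rpow
  have hPn : P ^ n = (2 * Real.pi) ^ ((n:ℝ)^2/2) * N ^ (-(n:ℝ)/2) := by
    rw [hP, mul_pow, ← Real.rpow_natCast ((2*Real.pi) ^ ((n:ℝ)/2)) n,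
      ← Real.rpow_natCast (N ^ (-(1:ℝ)/2)) n,
      ← Real.rpow_mul (by positivity), ← Real.rpow_mul (le_of_lt hNpos)]
    congr 1 <;> congr 1 <;> ring
  rw [hPn, hP]
  -- final power juggling
  have hfact1 : (((n+1).factorial : ℝ)) = N * (n.factorial : ℝ) := by
    rw [Nat.factorial_succ, hNdef]; push_cast; ring
  rw [hfact1]
  have h2pi : (0:ℝ) < 2 * Real.pi := by have := Real.pi_pos; linarith
  have e1 : (0:ℝ) < (2 * Real.pi) ^ ((n:ℝ)^2/2) := Real.rpow_pos_of_pos h2pi _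
  have e2 : (0:ℝ) < (2 * Real.pi) ^ ((n:ℝ)/2) := Real.rpow_pos_of_pos h2pi _
  have e3 : (0:ℝ) < N ^ (-(n:ℝ)/2) := Real.rpow_pos_of_pos hNpos _
  have e4 : (0:ℝ) < N ^ (-(1:ℝ)/2) := Real.rpow_pos_of_pos hNpos _
  have e5 : (0:ℝ) < N ^ ((3*(n:ℝ)^2 - n)/2) := Real.rpow_pos_of_pos hNpos _
  have e6 : (0:ℝ) < (n.factorial : ℝ) := by positivity
  have aux : ∀ x y A B C D E : ℝ, 0 < x → 0 < y →
      y * (x^A * y^B) / (y^C * (x^D * y^E)) = x^(A-D) * y^(1+B-C-E) := by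
    intro x y A B C D E hx hy
    rw [Real.rpow_sub hx, show (1:ℝ)+B-C-E = 1+B-(C+E) from by ring, Real.rpow_sub hy,
      Real.rpow_add hy 1 B, Real.rpow_add hy C E, Real.rpow_one]
    have p1 : (0:ℝ) < x ^ D := Real.rpow_pos_of_pos hx _
    have p2 : (0:ℝ) < y ^ C := Real.rpow_pos_of_pos hy _
    have p3 : (0:ℝ) < y ^ E := Real.rpow_pos_of_pos hy _
    field_simp
  have key : N * ((2 * Real.pi) ^ ((n:ℝ)^2/2) * N ^ (-(n:ℝ)/2))
      / (N ^ ((3*(n:ℝ)^2 - n)/2) * ((2 * Real.pi) ^ ((n:ℝ)/2) * N ^ (-(1:ℝ)/2)))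
      = (2 * Real.pi) ^ (((n:ℝ)^2 - n)/2) * N ^ (-(3 * ((n:ℝ)^2 - 1) / 2)) := by
    rw [aux _ _ _ _ _ _ _ h2pi hNpos]
    congr 1
    · congr 1
      ring
    · congr 1
      ring
  set Q : ℝ := ∏ m ∈ Finset.Icc 1 (n-1), (((m+n+1).factorial : ℝ)) with hQ
  have hstep : N * (n.factorial : ℝ) * Q / (n.factorial : ℝ) / N ^ ((3*(n:ℝ)^2 - n)/2)
      * ((2 * Real.pi) ^ ((n:ℝ)^2/2) * N ^ (-(n:ℝ)/2))
      / ((2 * Real.pi) ^ ((n:ℝ)/2) * N ^ (-(1:ℝ)/2))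
      = Q * (N * ((2 * Real.pi) ^ ((n:ℝ)^2/2) * N ^ (-(n:ℝ)/2))
        / (N ^ ((3*(n:ℝ)^2 - n)/2) * ((2 * Real.pi) ^ ((n:ℝ)/2) * N ^ (-(1:ℝ)/2)))) := by
    field_simp
  rw [hstep, key]
  ring
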